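/- Let g : ℝ → ℝ be integrable with ∫ g = 0 and ∫ |x g(x)| dx < ∞, and set G(x) = ∫_{−∞}^x g. Then |G(x)| ≤ G₁(x) + G₂(x), where G₁(x) = 1_{x≤0} ∫_{−∞}^x |g| and G₂(x) = 1_{x≥0} ∫_x^∞ |g| are monotone (nondecreasing resp. nonincreasing) integrable functions; hence G is directly Riemann integrable. -/

import Mathlib

open MeasureTheory

open Set ENNReal in
private lemma fubini_neg (f : ℝ → ℝ≥0∞) (hf : Measurable f) :
    ∫⁻ x in Set.Iic (0:ℝ), ∫⁻ z in Set.Iic x, f z ≤ ∫⁻ z, f z * ENNReal.ofReal |z| := by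
  have h1 : ∀ x : ℝ, ∫⁻ z in Set.Iic x, f z = ∫⁻ z, (if z ≤ x then f z else 0) := by
    intro x
    rw [← lintegral_indicator measurableSet_Iic]
    exact lintegral_congr fun z => by simp [Set.indicator_apply, Set.mem_Iic]
  simp_rw [h1]
  rw [lintegral_lintegral_swap
    ((Measurable.ite (measurableSet_le measurable_snd measurable_fst)
      (hf.comp measurable_snd) measurable_const).aemeasurable)]
  have h2 : ∀ z : ℝ, (∫⁻ x in Set.Iic (0:ℝ), (if z ≤ x then f z else 0))
      = f z * ENNReal.ofReal (0 - z) := by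
    intro z
    have hfun : (fun x : ℝ => if z ≤ x then f z else 0)
        = (Set.Ici z).indicator (fun _ => f z) := by
      ext x; simp [Set.indicator_apply, Set.mem_Ici]
    rw [hfun, lintegral_indicator_const measurableSet_Ici,
      Measure.restrict_apply measurableSet_Ici, Set.Ici_inter_Iic, Real.volume_Icc]
  calc ∫⁻ z, ∫⁻ x in Set.Iic (0:ℝ), (if z ≤ x then f z else 0)
      = ∫⁻ z, f z * ENNReal.ofReal (0 - z) := lintegral_congr h2
    _ ≤ ∫⁻ z, f z * ENNReal.ofReal |z| := by
        refine lintegral_mono fun z => mul_le_mul_right (ENNReal.ofReal_le_ofReal ?_) _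
        rw [zero_sub]; exact neg_le_abs z

open Set ENNReal in
private lemma fubini_pos (f : ℝ → ℝ≥0∞) (hf : Measurable f) :
    ∫⁻ x in Set.Ici (0:ℝ), ∫⁻ z in Set.Ici x, f z ≤ ∫⁻ z, f z * ENNReal.ofReal |z| := by
  have h1 : ∀ x : ℝ, ∫⁻ z in Set.Ici x, f z = ∫⁻ z, (if x ≤ z then f z else 0) := by
    intro x
    rw [← lintegral_indicator measurableSet_Ici]
    exact lintegral_congr fun z => by simp [Set.indicator_apply, Set.mem_Ici]
  simp_rw [h1]
  rw [lintegral_lintegral_swap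
    ((Measurable.ite (measurableSet_le measurable_fst measurable_snd)
      (hf.comp measurable_snd) measurable_const).aemeasurable)]
  have h2 : ∀ z : ℝ, (∫⁻ x in Set.Ici (0:ℝ), (if x ≤ z then f z else 0))
      = f z * ENNReal.ofReal (z - 0) := by
    intro z
    have hfun : (fun x : ℝ => if x ≤ z then f z else 0)
        = (Set.Iic z).indicator (fun _ => f z) := by
      ext x; simp [Set.indicator_apply, Set.mem_Iic]
    rw [hfun, lintegral_indicator_const measurableSet_Iic,
      Measure.restrict_apply measurableSet_Iic]
    rw [Set.inter_comm, Set.Ici_inter_Iic, Real.volume_Icc]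
  calc ∫⁻ z, ∫⁻ x in Set.Ici (0:ℝ), (if x ≤ z then f z else 0)
      = ∫⁻ z, f z * ENNReal.ofReal (z - 0) := lintegral_congr h2
    _ ≤ ∫⁻ z, f z * ENNReal.ofReal |z| := by
        refine lintegral_mono fun z => mul_le_mul_right (ENNReal.ofReal_le_ofReal ?_) _
        rw [sub_zero]; exact le_abs_self z

private lemma integrable_H1 (g : ℝ → ℝ) (hg : Integrable g)
    (hxg : Integrable (fun x => x * g x)) :
    Integrable (Set.indicator (Set.Iic 0) (fun x => ∫ z in Set.Iic x, |g z|)) := by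
  set G1 : ℝ → ℝ := fun x => ∫ z in Set.Iic x, |g z| with hG1def
  have habs : Integrable (fun z => |g z|) := hg.abs
  have hmono : Monotone G1 := fun a b hab =>
    setIntegral_mono_set habs.integrableOn
      (Filter.Eventually.of_forall fun z => abs_nonneg _)
      (HasSubset.Subset.eventuallyLE (Set.Iic_subset_Iic.2 hab))
  have hnn : ∀ x, 0 ≤ G1 x := fun x =>
    setIntegral_nonneg measurableSet_Iic fun z _ => abs_nonneg _
  constructor
  · exact (hmono.measurable.indicator measurableSet_Iic).aestronglyMeasurable
  · rw [hasFiniteIntegral_iff_ofReal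
      (Filter.Eventually.of_forall fun x => Set.indicator_nonneg (fun y _ => hnn y) x)]
    obtain ⟨g₀, hg₀m, hgg₀⟩ : ∃ g₀ : ℝ → ℝ, Measurable g₀ ∧ g =ᵐ[volume] g₀ :=
      ⟨hg.1.mk g, hg.1.stronglyMeasurable_mk.measurable, hg.1.ae_eq_mk⟩
    set f : ℝ → ENNReal := fun z => ENNReal.ofReal |g₀ z| with hfdef
    have hfm : Measurable f := hg₀m.abs.ennreal_ofReal
    have key : ∀ x : ℝ, ENNReal.ofReal (G1 x) = ∫⁻ z in Set.Iic x, f z := by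
      intro x
      rw [ofReal_integral_eq_lintegral_ofReal habs.integrableOn
        (Filter.Eventually.of_forall fun z => abs_nonneg _)]
      exact lintegral_congr_ae (ae_restrict_of_ae (hgg₀.mono fun z hz => by simp only [hz, hfdef]))
    calc ∫⁻ x, ENNReal.ofReal (Set.indicator (Set.Iic 0) G1 x)
        = ∫⁻ x, (Set.Iic (0:ℝ)).indicator (fun x => ENNReal.ofReal (G1 x)) x := by
          refine lintegral_congr fun x => ?_
          by_cases h : x ∈ Set.Iic (0:ℝ) <;> simp [h]
      _ = ∫⁻ x in Set.Iic (0:ℝ), ENNReal.ofReal (G1 x) :=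
          lintegral_indicator measurableSet_Iic _
      _ = ∫⁻ x in Set.Iic (0:ℝ), ∫⁻ z in Set.Iic x, f z := lintegral_congr key
      _ ≤ ∫⁻ z, f z * ENNReal.ofReal |z| := fubini_neg f hfm
      _ = ∫⁻ z, ENNReal.ofReal |z * g₀ z| := by
          refine lintegral_congr fun z => ?_
          rw [← ENNReal.ofReal_mul (abs_nonneg _), ← abs_mul, mul_comm]
      _ = ∫⁻ z, ENNReal.ofReal |z * g z| :=
          lintegral_congr_ae (hgg₀.mono fun z hz => by simp only [hz])
      _ < ⊤ := by
          have h2 := hxg.abs.hasFiniteIntegral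
          rwa [hasFiniteIntegral_iff_ofReal
            (Filter.Eventually.of_forall fun x => abs_nonneg _)] at h2

private lemma integrable_H2 (g : ℝ → ℝ) (hg : Integrable g)
    (hxg : Integrable (fun x => x * g x)) :
    Integrable (Set.indicator (Set.Ici 0) (fun x => ∫ z in Set.Ici x, |g z|)) := by
  set G2 : ℝ → ℝ := fun x => ∫ z in Set.Ici x, |g z| with hG2def
  have habs : Integrable (fun z => |g z|) := hg.abs
  have hanti : Antitone G2 := fun a b hab =>
    setIntegral_mono_set habs.integrableOn
      (Filter.Eventually.of_forall fun z => abs_nonneg _)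
      (HasSubset.Subset.eventuallyLE (Set.Ici_subset_Ici.2 hab))
  have hnn : ∀ x, 0 ≤ G2 x := fun x =>
    setIntegral_nonneg measurableSet_Ici fun z _ => abs_nonneg _
  constructor
  · exact (hanti.measurable.indicator measurableSet_Ici).aestronglyMeasurable
  · rw [hasFiniteIntegral_iff_ofReal
      (Filter.Eventually.of_forall fun x => Set.indicator_nonneg (fun y _ => hnn y) x)]
    obtain ⟨g₀, hg₀m, hgg₀⟩ : ∃ g₀ : ℝ → ℝ, Measurable g₀ ∧ g =ᵐ[volume] g₀ :=
      ⟨hg.1.mk g, hg.1.stronglyMeasurable_mk.measurable, hg.1.ae_eq_mk⟩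
    set f : ℝ → ENNReal := fun z => ENNReal.ofReal |g₀ z| with hfdef
    have hfm : Measurable f := hg₀m.abs.ennreal_ofReal
    have key : ∀ x : ℝ, ENNReal.ofReal (G2 x) = ∫⁻ z in Set.Ici x, f z := by
      intro x
      rw [ofReal_integral_eq_lintegral_ofReal habs.integrableOn
        (Filter.Eventually.of_forall fun z => abs_nonneg _)]
      exact lintegral_congr_ae (ae_restrict_of_ae (hgg₀.mono fun z hz => by simp only [hz, hfdef]))
    calc ∫⁻ x, ENNReal.ofReal (Set.indicator (Set.Ici 0) G2 x)
        = ∫⁻ x, (Set.Ici (0:ℝ)).indicator (fun x => ENNReal.ofReal (G2 x)) x := by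
          refine lintegral_congr fun x => ?_
          by_cases h : x ∈ Set.Ici (0:ℝ) <;> simp [h]
      _ = ∫⁻ x in Set.Ici (0:ℝ), ENNReal.ofReal (G2 x) :=
          lintegral_indicator measurableSet_Ici _
      _ = ∫⁻ x in Set.Ici (0:ℝ), ∫⁻ z in Set.Ici x, f z := lintegral_congr key
      _ ≤ ∫⁻ z, f z * ENNReal.ofReal |z| := fubini_pos f hfm
      _ = ∫⁻ z, ENNReal.ofReal |z * g₀ z| := by
          refine lintegral_congr fun z => ?_
          rw [← ENNReal.ofReal_mul (abs_nonneg _), ← abs_mul, mul_comm]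
      _ = ∫⁻ z, ENNReal.ofReal |z * g z| :=
          lintegral_congr_ae (hgg₀.mono fun z hz => by simp only [hz])
      _ < ⊤ := by
          have h2 := hxg.abs.hasFiniteIntegral
          rwa [hasFiniteIntegral_iff_ofReal
            (Filter.Eventually.of_forall fun x => abs_nonneg _)] at h2

/-- A function is directly Riemann integrable if the sum over the unit grid of the
suprema of its absolute value is finite. -/
noncomputable def DirectlyRiemannIntegrable (h : ℝ → ℝ) : Prop :=
  Summable (fun n : ℤ => ⨆ x ∈ Set.Icc (n : ℝ) ((n : ℝ) + 1), |h x|)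

theorem primitive_directly_riemann_integrable (g : ℝ → ℝ) (hg : Integrable g)
    (h0 : ∫ x, g x = 0) (hxg : Integrable (fun x => x * g x)) :
    (∀ x : ℝ, |∫ z in Set.Iic x, g z| ≤
        Set.indicator (Set.Iic 0) (fun x => ∫ z in Set.Iic x, |g z|) x
          + Set.indicator (Set.Ici 0) (fun x => ∫ z in Set.Ici x, |g z|) x) ∧
      MonotoneOn (fun x => ∫ z in Set.Iic x, |g z|) (Set.Iic 0) ∧
      AntitoneOn (fun x => ∫ z in Set.Ici x, |g z|) (Set.Ici 0) ∧
      Integrable (Set.indicator (Set.Iic 0) (fun x => ∫ z in Set.Iic x, |g z|)) ∧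
      Integrable (Set.indicator (Set.Ici 0) (fun x => ∫ z in Set.Ici x, |g z|)) ∧
      DirectlyRiemannIntegrable (fun x => ∫ z in Set.Iic x, g z) := by
  have habs : Integrable (fun z => |g z|) := hg.abs
  set G1 : ℝ → ℝ := fun x => ∫ z in Set.Iic x, |g z| with hG1def
  set G2 : ℝ → ℝ := fun x => ∫ z in Set.Ici x, |g z| with hG2def
  set G : ℝ → ℝ := fun x => ∫ z in Set.Iic x, g z with hGdef
  have hmono : Monotone G1 := fun a b hab =>
    setIntegral_mono_set habs.integrableOn
      (Filter.Eventually.of_forall fun z => abs_nonneg _)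
      (HasSubset.Subset.eventuallyLE (Set.Iic_subset_Iic.2 hab))
  have hanti : Antitone G2 := fun a b hab =>
    setIntegral_mono_set habs.integrableOn
      (Filter.Eventually.of_forall fun z => abs_nonneg _)
      (HasSubset.Subset.eventuallyLE (Set.Ici_subset_Ici.2 hab))
  have hnn1 : ∀ x, 0 ≤ G1 x := fun x =>
    setIntegral_nonneg measurableSet_Iic fun z _ => abs_nonneg _
  have hnn2 : ∀ x, 0 ≤ G2 x := fun x =>
    setIntegral_nonneg measurableSet_Ici fun z _ => abs_nonneg _
  have hb1 : ∀ x, |G x| ≤ G1 x := fun x => by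
    simpa [Real.norm_eq_abs] using
      norm_integral_le_integral_norm (μ := volume.restrict (Set.Iic x)) g
  have hb2 : ∀ x, |G x| ≤ G2 x := by
    intro x
    have hx : G x + ∫ z in Set.Ioi x, g z = 0 := by
      rw [← h0]; exact intervalIntegral.integral_Iic_add_Ioi hg.integrableOn hg.integrableOn
    calc |G x| = |∫ z in Set.Ioi x, g z| := by
          rw [eq_neg_of_add_eq_zero_left hx, abs_neg]
      _ ≤ ∫ z in Set.Ioi x, |g z| := by
          simpa [Real.norm_eq_abs] using
            norm_integral_le_integral_norm (μ := volume.restrict (Set.Ioi x)) g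
      _ = G2 x := (integral_Ici_eq_integral_Ioi).symm
  have hind1nn : ∀ x, 0 ≤ Set.indicator (Set.Iic 0) G1 x := fun x =>
    Set.indicator_nonneg (fun y _ => hnn1 y) x
  have hind2nn : ∀ x, 0 ≤ Set.indicator (Set.Ici 0) G2 x := fun x =>
    Set.indicator_nonneg (fun y _ => hnn2 y) x
  have hint1 : Integrable (Set.indicator (Set.Iic 0) G1) := integrable_H1 g hg hxg
  have hint2 : Integrable (Set.indicator (Set.Ici 0) G2) := integrable_H2 g hg hxg
  refine ⟨?_, hmono.monotoneOn _, hanti.antitoneOn _, hint1, hint2, ?_⟩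
  · intro x
    rcases le_or_gt x 0 with h | h
    · rw [Set.indicator_of_mem (Set.mem_Iic.mpr h)]
      exact le_add_of_le_of_nonneg (hb1 x) (hind2nn x)
    · rw [Set.indicator_of_mem (Set.mem_Ici.mpr h.le)]
      exact le_add_of_nonneg_of_le (hind1nn x) (hb2 x)
  -- direct Riemann integrability
  set c : ℤ → ℝ := fun n => min (G1 ((n:ℝ) + 1)) (G2 (n:ℝ)) with hcdef
  have hcnn : ∀ n, 0 ≤ c n := fun n => le_min (hnn1 _) (hnn2 _)
  have hsupb : ∀ n : ℤ, (⨆ x ∈ Set.Icc (n:ℝ) ((n:ℝ) + 1), |G x|) ≤ c n := by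
    intro n
    refine Real.iSup_le (fun x => Real.iSup_le (fun hx => ?_) (hcnn n)) (hcnn n)
    exact le_min ((hb1 x).trans (hmono hx.2)) ((hb2 x).trans (hanti hx.1))
  -- positive side
  have hdpos : Pairwise (Function.onFun Disjoint fun n : ℕ => Set.Ico (n:ℝ) ((n:ℝ) + 1)) := by
    intro m n hmn
    simp only [Function.onFun]
    rw [Set.Ico_disjoint_Ico]
    rcases hmn.lt_or_gt with h | h
    · have h' : (m:ℝ) + 1 ≤ n := by exact_mod_cast h
      exact (min_le_left _ _).trans (h'.trans (le_max_right _ _))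
    · have h' : (n:ℝ) + 1 ≤ m := by exact_mod_cast h
      exact (min_le_right _ _).trans (h'.trans (le_max_left _ _))
  have hT2 : Summable (fun n : ℕ =>
      ∫ x in Set.Ico (n:ℝ) ((n:ℝ) + 1), Set.indicator (Set.Ici 0) G2 x) :=
    (hasSum_integral_iUnion (fun n => measurableSet_Ico) hdpos
      hint2.integrableOn).summable
  have hle2 : ∀ n : ℕ, G2 ((n:ℝ) + 1) ≤
      ∫ x in Set.Ico (n:ℝ) ((n:ℝ) + 1), Set.indicator (Set.Ici 0) G2 x := by
    intro n
    have hvol : volume (Set.Ico (n:ℝ) ((n:ℝ) + 1)) = 1 := by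
      rw [Real.volume_Ico]; simp
    have hb : ∀ x ∈ Set.Ico (n:ℝ) ((n:ℝ) + 1),
        G2 ((n:ℝ) + 1) ≤ Set.indicator (Set.Ici 0) G2 x := by
      intro x hx
      rw [Set.indicator_of_mem (Set.mem_Ici.mpr ((Nat.cast_nonneg n).trans hx.1))]
      exact hanti hx.2.le
    have := setIntegral_ge_of_const_le measurableSet_Ico
      (by rw [hvol]; exact ENNReal.one_ne_top) hb hint2.integrableOn
    rwa [measureReal_def, hvol, ENNReal.toReal_one, one_smul] at this
  have hpos : Summable fun n : ℕ => c n := by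
    rw [← summable_nat_add_iff 1]
    refine Summable.of_nonneg_of_le (fun n => hcnn _) (fun n => ?_) hT2
    calc c ((n + 1 : ℕ) : ℤ) ≤ G2 (((n + 1 : ℕ) : ℤ) : ℝ) := min_le_right _ _
      _ = G2 ((n:ℝ) + 1) := by push_cast; ring_nf
      _ ≤ _ := hle2 n
  -- negative side
  have hdneg : Pairwise (Function.onFun Disjoint fun n : ℕ => Set.Ico (-(n:ℝ) - 1) (-(n:ℝ))) := by
    intro m n hmn
    simp only [Function.onFun]
    rw [Set.Ico_disjoint_Ico]
    rcases hmn.lt_or_gt with h | h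
    · have h' : (m:ℝ) + 1 ≤ n := by exact_mod_cast h
      have : -(n:ℝ) ≤ -(m:ℝ) - 1 := by linarith
      exact (min_le_right _ _).trans (this.trans (le_max_left _ _))
    · have h' : (n:ℝ) + 1 ≤ m := by exact_mod_cast h
      have : -(m:ℝ) ≤ -(n:ℝ) - 1 := by linarith
      exact (min_le_left _ _).trans (this.trans (le_max_right _ _))
  have hT1 : Summable (fun n : ℕ =>
      ∫ x in Set.Ico (-(n:ℝ) - 1) (-(n:ℝ)), Set.indicator (Set.Iic 0) G1 x) :=
    (hasSum_integral_iUnion (fun n => measurableSet_Ico) hdneg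
      hint1.integrableOn).summable
  have hle1 : ∀ n : ℕ, G1 (-(n:ℝ) - 1) ≤
      ∫ x in Set.Ico (-(n:ℝ) - 1) (-(n:ℝ)), Set.indicator (Set.Iic 0) G1 x := by
    intro n
    have hvol : volume (Set.Ico (-(n:ℝ) - 1) (-(n:ℝ))) = 1 := by
      rw [Real.volume_Ico]; norm_num
    have hb : ∀ x ∈ Set.Ico (-(n:ℝ) - 1) (-(n:ℝ)),
        G1 (-(n:ℝ) - 1) ≤ Set.indicator (Set.Iic 0) G1 x := by
      intro x hx
      have hx0 : x ∈ Set.Iic (0:ℝ) := by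
        have : -(n:ℝ) ≤ 0 := by simp
        exact le_of_lt (lt_of_lt_of_le hx.2 this)
      rw [Set.indicator_of_mem hx0]
      exact hmono hx.1
    have := setIntegral_ge_of_const_le measurableSet_Ico
      (by rw [hvol]; exact ENNReal.one_ne_top) hb hint1.integrableOn
    rwa [measureReal_def, hvol, ENNReal.toReal_one, one_smul] at this
  have hneg : Summable fun n : ℕ => c (-(n + 1)) := by
    rw [← summable_nat_add_iff 1]
    refine Summable.of_nonneg_of_le (fun n => hcnn _) (fun n => ?_) hT1
    calc c (-((n + 1 : ℕ) + 1)) ≤ G1 (((-((n + 1 : ℕ) + 1) : ℤ) : ℝ) + 1) := min_le_left _ _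
      _ = G1 (-(n:ℝ) - 1) := by push_cast; ring_nf
      _ ≤ _ := hle1 n
  exact Summable.of_nonneg_of_le
    (fun n => Real.iSup_nonneg fun x => Real.iSup_nonneg fun _ => abs_nonneg _)
    hsupb (Summable.of_nat_of_neg_add_one hpos hneg)
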